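/- Let n ≥ 2 and m ≥ 2 be integers and 0 < r < R real numbers. There exist a constant C ≥ 1 and ε₀ ∈ (0,1) such that for all 0 < ε < ε₀, C⁻¹·ε^{1/m − 1} ≤ ∫_{{x' ∈ ℝ^{n−1} : r < |x'| < R}} 1 / (ε + (|x'| − r)^m) dx' ≤ C·ε^{1/m − 1}. -/

import Mathlib

open MeasureTheory

lemma one_dim_bounds (m : ℕ) (hm : 2 ≤ m) (L : ℝ) (hL : 0 < L) (ε : ℝ) (hε : 0 < ε)
    (hεL : ε < L ^ m) :
    (1/2) * ε ^ ((1:ℝ)/m - 1) ≤ (∫ s in Set.Ioo (0:ℝ) L, 1/(ε + s^m)) ∧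
    (∫ s in Set.Ioo (0:ℝ) L, 1/(ε + s^m)) ≤ 2 * ε ^ ((1:ℝ)/m - 1) := by
  have hm0 : (m:ℝ) ≠ 0 := by positivity
  set δ : ℝ := ε ^ ((1:ℝ)/m) with hδdef
  have hδpos : 0 < δ := Real.rpow_pos_of_pos hε _
  have hδm : δ ^ m = ε := by
    rw [hδdef, ← Real.rpow_natCast (ε ^ ((1:ℝ)/m)) m, ← Real.rpow_mul hε.le]
    rw [one_div_mul_cancel hm0, Real.rpow_one]
  have hδL : δ < L := by
    refine lt_of_pow_lt_pow_left₀ m hL.le ?_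
    rw [hδm]; exact hεL
  have hpow : δ / ε = ε ^ ((1:ℝ)/m - 1) := by
    rw [Real.rpow_sub hε, Real.rpow_one]
  have hcont : ∀ a b : ℝ, 0 ≤ a → ContinuousOn (fun s : ℝ => 1/(ε + s^m)) (Set.Icc a b) := by
    intro a b ha
    refine ContinuousOn.div continuousOn_const (by fun_prop) ?_
    intro s hs
    have : 0 ≤ s := le_trans ha hs.1
    positivity
  have hIcc : ∀ a b : ℝ, 0 ≤ a → IntegrableOn (fun s : ℝ => 1/(ε + s^m)) (Set.Icc a b) volume :=
    fun a b ha => (hcont a b ha).integrableOn_Icc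
  have hIoo : IntegrableOn (fun s : ℝ => 1/(ε + s^m)) (Set.Ioo 0 L) volume :=
    (hIcc 0 L le_rfl).mono_set Set.Ioo_subset_Icc_self
  have hnonneg : ∀ s : ℝ, s ∈ Set.Ioo (0:ℝ) L → 0 ≤ 1/(ε + s^m) := by
    intro s hs
    have : 0 ≤ s := hs.1.le
    positivity
  constructor
  · -- lower bound
    have step1 : (∫ s in Set.Ioo (0:ℝ) δ, 1/(ε + s^m)) ≤ ∫ s in Set.Ioo (0:ℝ) L, 1/(ε + s^m) := by
      refine setIntegral_mono_set hIoo ?_ ?_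
      · filter_upwards [ae_restrict_mem measurableSet_Ioo] with s hs using hnonneg s hs
      · exact HasSubset.Subset.eventuallyLE (Set.Ioo_subset_Ioo le_rfl hδL.le)
    have step2 : (∫ s in Set.Ioo (0:ℝ) δ, (1/(2*ε) : ℝ)) ≤ ∫ s in Set.Ioo (0:ℝ) δ, 1/(ε + s^m) := by
      refine setIntegral_mono_on (integrableOn_const measure_Ioo_lt_top.ne)
        ((hIcc 0 δ le_rfl).mono_set Set.Ioo_subset_Icc_self) measurableSet_Ioo ?_
      intro s hs
      have hs0 : 0 ≤ s := hs.1.le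
      have h1 : s ^ m ≤ ε := by
        rw [← hδm]; exact pow_le_pow_left₀ hs0 hs.2.le m
      have h2 : ε + s ^ m ≤ 2 * ε := by linarith
      have h3 : 0 < ε + s ^ m := by positivity
      exact one_div_le_one_div_of_le h3 h2
    have hconst : (∫ s in Set.Ioo (0:ℝ) δ, (1/(2*ε) : ℝ)) = δ * (1/(2*ε)) := by
      rw [setIntegral_const, measureReal_def, Real.volume_Ioo, smul_eq_mul,
        ENNReal.toReal_ofReal (by linarith : (0:ℝ) ≤ δ - 0), sub_zero]
    have heq : (1/2) * ε ^ ((1:ℝ)/m - 1) = δ * (1/(2*ε)) := by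
      rw [← hpow]; ring
    rw [heq]
    calc δ * (1/(2*ε)) = ∫ s in Set.Ioo (0:ℝ) δ, (1/(2*ε) : ℝ) := hconst.symm
      _ ≤ _ := le_trans step2 step1
  · -- upper bound
    have h1 : IntervalIntegrable (fun s : ℝ => 1/(ε + s^m)) volume 0 δ :=
      (hcont 0 δ le_rfl).intervalIntegrable_of_Icc hδpos.le
    have h2 : IntervalIntegrable (fun s : ℝ => 1/(ε + s^m)) volume δ L :=
      (hcont δ L hδpos.le).intervalIntegrable_of_Icc hδL.le
    have hsplit : (∫ s in Set.Ioo (0:ℝ) L, 1/(ε + s^m))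
        = (∫ s in (0:ℝ)..δ, 1/(ε + s^m)) + ∫ s in δ..L, 1/(ε + s^m) := by
      rw [intervalIntegral.integral_add_adjacent_intervals h1 h2,
        intervalIntegral.integral_of_le (by linarith : (0:ℝ) ≤ L),
        integral_Ioc_eq_integral_Ioo]
    have b1 : (∫ s in (0:ℝ)..δ, 1/(ε + s^m)) ≤ ε ^ ((1:ℝ)/m - 1) := by
      have hb : (∫ s in (0:ℝ)..δ, 1/(ε + s^m)) ≤ ∫ _ in (0:ℝ)..δ, (1/ε : ℝ) := by
        refine intervalIntegral.integral_mono_on hδpos.le h1 intervalIntegrable_const ?_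
        intro s hs
        have hs0 : 0 ≤ s := hs.1
        have : (0:ℝ) ≤ s ^ m := by positivity
        exact one_div_le_one_div_of_le hε (by linarith)
      rw [intervalIntegral.integral_const, smul_eq_mul, sub_zero] at hb
      calc (∫ s in (0:ℝ)..δ, 1/(ε + s^m)) ≤ δ * (1/ε) := hb
        _ = δ / ε := by ring
        _ = _ := hpow
    have b2 : (∫ s in δ..L, 1/(ε + s^m)) ≤ ε ^ ((1:ℝ)/m - 1) := by
      set c : ℝ := -(m:ℝ) with hc
      have hc1 : c + 1 ≤ -1 := by
        have : (2:ℝ) ≤ (m:ℝ) := by exact_mod_cast hm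
        simp only [hc]; linarith
      have hc1' : c + 1 < 0 := by linarith
      have hcne : c ≠ -1 := by intro h; rw [h] at hc1; linarith
      have hzero : (0:ℝ) ∉ Set.uIcc δ L := by
        rw [Set.uIcc_of_le hδL.le]
        intro h; exact absurd h.1 (by linarith)
      have hrint : IntervalIntegrable (fun s : ℝ => s ^ c) volume δ L :=
        intervalIntegral.intervalIntegrable_rpow (Or.inr hzero)
      have cmp : (∫ s in δ..L, 1/(ε + s^m)) ≤ ∫ s in δ..L, s ^ c := by
        refine intervalIntegral.integral_mono_on hδL.le h2 hrint ?_
        intro s hs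
        have hs0 : 0 < s := lt_of_lt_of_le hδpos hs.1
        rw [hc, Real.rpow_neg hs0.le, Real.rpow_natCast, one_div]
        exact inv_anti₀ (pow_pos hs0 m) (le_add_of_nonneg_left hε.le)
      have hval : (∫ s in δ..L, s ^ c) = (L ^ (c+1) - δ ^ (c+1)) / (c+1) :=
        integral_rpow (Or.inr ⟨hcne, hzero⟩)
      have hLc : 0 < L ^ (c+1) := Real.rpow_pos_of_pos hL _
      have hδc : 0 < δ ^ (c+1) := Real.rpow_pos_of_pos hδpos _
      have hub : (L ^ (c+1) - δ ^ (c+1)) / (c+1) ≤ δ ^ (c+1) := by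
        rw [div_le_iff_of_neg hc1']
        nlinarith [mul_le_mul_of_nonneg_left hc1 hδc.le, hLc.le]
      have hδeq : δ ^ (c+1) = ε ^ ((1:ℝ)/m - 1) := by
        rw [hδdef, ← Real.rpow_mul hε.le]
        congr 1
        rw [hc]
        field_simp
        ring
      calc (∫ s in δ..L, 1/(ε + s^m)) ≤ ∫ s in δ..L, s ^ c := cmp
        _ = (L ^ (c+1) - δ ^ (c+1)) / (c+1) := hval
        _ ≤ δ ^ (c+1) := hub
        _ = ε ^ ((1:ℝ)/m - 1) := hδeq
    calc (∫ s in Set.Ioo (0:ℝ) L, 1/(ε + s^m)) = _ := hsplit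
      _ ≤ ε ^ ((1:ℝ)/m - 1) + ε ^ ((1:ℝ)/m - 1) := add_le_add b1 b2
      _ = 2 * ε ^ ((1:ℝ)/m - 1) := by ring

lemma polar_eq (n m : ℕ) (hn : 2 ≤ n) (r R ε : ℝ) (hr : 0 < r) (hε : 0 < ε) :
    (∫ x in {x : EuclideanSpace ℝ (Fin (n - 1)) | r < ‖x‖ ∧ ‖x‖ < R}, 1/(ε + (‖x‖ - r)^m))
      = (n - 1 : ℕ) * (volume (Metric.ball (0:EuclideanSpace ℝ (Fin (n-1))) 1)).toReal
        * ∫ t in Set.Ioo r R, t ^ (n - 1 - 1) * (1/(ε + (t - r)^m)) := by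
  haveI : Nonempty (Fin (n-1)) := ⟨⟨0, by omega⟩⟩
  haveI : Nontrivial (EuclideanSpace ℝ (Fin (n-1))) := by infer_instance
  set E := EuclideanSpace ℝ (Fin (n-1))
  set f : ℝ → ℝ := (Set.Ioo r R).indicator (fun t => 1/(ε + (t - r)^m)) with hf
  have hset : {x : E | r < ‖x‖ ∧ ‖x‖ < R} = (fun x : E => ‖x‖) ⁻¹' (Set.Ioo r R) := rfl
  have hSmeas : MeasurableSet {x : E | r < ‖x‖ ∧ ‖x‖ < R} := by
    rw [hset]; exact (isOpen_Ioo.preimage continuous_norm).measurableSet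
  have step1 : (∫ x in {x : E | r < ‖x‖ ∧ ‖x‖ < R}, 1/(ε + (‖x‖ - r)^m))
      = ∫ x : E, f ‖x‖ := by
    rw [← integral_indicator hSmeas]
    refine integral_congr_ae (Filter.Eventually.of_forall fun x => ?_)
    rw [hset]
    by_cases hx : ‖x‖ ∈ Set.Ioo r R
    · rw [Set.indicator_of_mem (Set.mem_preimage.mpr hx)]
      exact (Set.indicator_of_mem hx (fun t => 1/(ε + (t - r)^m))).symm
    · rw [Set.indicator_of_notMem (fun h => hx (Set.mem_preimage.mp h))]
      exact (Set.indicator_of_notMem hx (fun t => 1/(ε + (t - r)^m))).symm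
  have hdim : Module.finrank ℝ E = n - 1 := by
    simp [E, finrank_euclideanSpace]
  have step2 : (∫ x : E, f ‖x‖)
      = (n-1 : ℕ) • (volume (Metric.ball (0:E) 1)).toReal • ∫ y in Set.Ioi (0:ℝ), y ^ (n-1-1) • f y := by
    have h := integral_fun_norm_addHaar (volume : Measure E) f
    rw [hdim] at h
    exact h
  have step3 : (∫ y in Set.Ioi (0:ℝ), y ^ (n-1-1) • f y)
      = ∫ t in Set.Ioo r R, t ^ (n-1-1) * (1/(ε + (t - r)^m)) := by
    have hpt : ∀ y : ℝ, y ^ (n-1-1) • f y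
        = (Set.Ioo r R).indicator (fun t => t ^ (n-1-1) * (1/(ε + (t - r)^m))) y := by
      intro y
      by_cases hy : y ∈ Set.Ioo r R
      · rw [hf, Set.indicator_of_mem hy, Set.indicator_of_mem hy, smul_eq_mul]
      · rw [hf, Set.indicator_of_notMem hy, Set.indicator_of_notMem hy, smul_zero]
    simp_rw [hpt]
    rw [setIntegral_indicator measurableSet_Ioo]
    have hinter : Set.Ioi (0:ℝ) ∩ Set.Ioo r R = Set.Ioo r R :=
      Set.inter_eq_right.mpr (fun t ht => lt_trans hr ht.1)
    rw [hinter]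
  rw [step1, step2, step3, nsmul_eq_mul, smul_eq_mul, mul_assoc]

/-- For integers `n ≥ 2`, `m ≥ 2` and reals `0 < r < R`, there are
`C ≥ 1` and `ε₀ ∈ (0,1)` such that for all `0 < ε < ε₀`,
`C⁻¹ ε^{1/m − 1} ≤ ∫_{r < |x'| < R} dx'/(ε + (|x'| − r)^m) ≤ C ε^{1/m − 1}`. -/
theorem annulus_integral_estimate (n m : ℕ) (hn : 2 ≤ n) (hm : 2 ≤ m)
    (r R : ℝ) (hr : 0 < r) (hrR : r < R) :
    ∃ C : ℝ, 1 ≤ C ∧ ∃ ε₀ : ℝ, 0 < ε₀ ∧ ε₀ < 1 ∧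
      ∀ ε : ℝ, 0 < ε → ε < ε₀ →
        C⁻¹ * ε ^ ((1 : ℝ) / m - 1)
            ≤ ∫ x in {x : EuclideanSpace ℝ (Fin (n - 1)) | r < ‖x‖ ∧ ‖x‖ < R},
                1 / (ε + (‖x‖ - r) ^ m)
        ∧ (∫ x in {x : EuclideanSpace ℝ (Fin (n - 1)) | r < ‖x‖ ∧ ‖x‖ < R},
                1 / (ε + (‖x‖ - r) ^ m))
            ≤ C * ε ^ ((1 : ℝ) / m - 1) := by
  classical
  set E := EuclideanSpace ℝ (Fin (n-1))
  haveI : Nonempty (Fin (n-1)) := ⟨⟨0, by omega⟩⟩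
  set d1 : ℕ := n - 1 - 1 with hd1
  have hvol : 0 < (volume (Metric.ball (0:E) 1)).toReal :=
    ENNReal.toReal_pos (Metric.measure_ball_pos volume _ one_pos).ne' measure_ball_lt_top.ne
  set c : ℝ := ((n - 1 : ℕ) : ℝ) * (volume (Metric.ball (0:E) 1)).toReal with hcdef
  have hn1 : (0:ℝ) < ((n - 1 : ℕ) : ℝ) := by
    have : 1 ≤ n - 1 := by omega
    exact_mod_cast Nat.lt_of_lt_of_le Nat.zero_lt_one this
  have hc : 0 < c := mul_pos hn1 hvol
  have hrd : (0:ℝ) < r ^ d1 := pow_pos hr d1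
  have hRd : (0:ℝ) < R ^ d1 := pow_pos (lt_trans hr hrR) d1
  refine ⟨1 + max (2 * c * R ^ d1) (2 / (c * r ^ d1)), ?_, min (1/2) ((R - r)^m), ?_, ?_, ?_⟩
  · have : (0:ℝ) ≤ max (2 * c * R ^ d1) (2 / (c * r ^ d1)) :=
      le_trans (by positivity) (le_max_left _ _)
    linarith
  · have h1 : (0:ℝ) < (R - r)^m := pow_pos (by linarith) m
    exact lt_min (by norm_num) h1
  · exact lt_of_le_of_lt (min_le_left _ _) (by norm_num)
  · intro ε hε hεε₀
    set C : ℝ := 1 + max (2 * c * R ^ d1) (2 / (c * r ^ d1)) with hCdef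
    have hεL : ε < (R - r)^m := lt_of_lt_of_le hεε₀ (min_le_right _ _)
    set p : ℝ := ε ^ ((1:ℝ)/m - 1) with hpdef
    have hp : 0 < p := Real.rpow_pos_of_pos hε _
    obtain ⟨hJlow, hJhigh⟩ := one_dim_bounds m hm (R - r) (by linarith) ε hε hεL
    set J : ℝ := ∫ s in Set.Ioo (0:ℝ) (R - r), 1/(ε + s^m) with hJdef
    -- translation
    have htrans : (∫ t in Set.Ioo r R, 1/(ε + (t - r)^m)) = J := by
      rw [hJdef, ← integral_Ioc_eq_integral_Ioo, ← integral_Ioc_eq_integral_Ioo,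
        ← intervalIntegral.integral_of_le hrR.le,
        ← intervalIntegral.integral_of_le (by linarith : (0:ℝ) ≤ R - r),
        intervalIntegral.integral_comp_sub_right (fun s => 1/(ε + s^m)) r, sub_self]
    -- integrability on Ioo r R
    have hcont : ContinuousOn (fun t : ℝ => 1/(ε + (t - r)^m)) (Set.Icc r R) := by
      refine ContinuousOn.div continuousOn_const (by fun_prop) ?_
      intro t ht
      have h1 : (0:ℝ) ≤ (t - r)^m := pow_nonneg (by linarith [ht.1]) m
      positivity
    have hfi : IntegrableOn (fun t : ℝ => 1/(ε + (t - r)^m)) (Set.Ioo r R) volume :=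
      hcont.integrableOn_Icc.mono_set Set.Ioo_subset_Icc_self
    have hgi : IntegrableOn (fun t : ℝ => t ^ d1 * (1/(ε + (t - r)^m))) (Set.Ioo r R) volume :=
      (ContinuousOn.mul (by fun_prop) hcont).integrableOn_Icc.mono_set Set.Ioo_subset_Icc_self
    have hfnn : ∀ t : ℝ, t ∈ Set.Ioo r R → 0 ≤ 1/(ε + (t - r)^m) := by
      intro t ht
      have h1 : (0:ℝ) ≤ (t - r)^m := pow_nonneg (by linarith [ht.1]) m
      positivity
    set K : ℝ := ∫ t in Set.Ioo r R, t ^ d1 * (1/(ε + (t - r)^m)) with hKdef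
    have hKlow : r ^ d1 * J ≤ K := by
      rw [← htrans, ← integral_const_mul]
      refine setIntegral_mono_on (hfi.const_mul _) hgi measurableSet_Ioo ?_
      intro t ht
      exact mul_le_mul_of_nonneg_right (pow_le_pow_left₀ hr.le ht.1.le _) (hfnn t ht)
    have hKhigh : K ≤ R ^ d1 * J := by
      rw [← htrans, ← integral_const_mul]
      refine setIntegral_mono_on hgi (hfi.const_mul _) measurableSet_Ioo ?_
      intro t ht
      exact mul_le_mul_of_nonneg_right
        (pow_le_pow_left₀ (le_trans hr.le ht.1.le) ht.2.le _) (hfnn t ht)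
    have hkey := polar_eq n m hn r R ε hr hε
    constructor
    · -- lower bound
      have hCinv : C⁻¹ ≤ c * r ^ d1 / 2 := by
        have h2 : (0:ℝ) < 2 / (c * r ^ d1) := by positivity
        have hCge : 2 / (c * r ^ d1) ≤ C := by
          rw [hCdef]
          have := le_max_right (2 * c * R ^ d1) (2 / (c * r ^ d1))
          linarith
        calc C⁻¹ ≤ (2 / (c * r ^ d1))⁻¹ := inv_anti₀ h2 hCge
          _ = c * r ^ d1 / 2 := by rw [inv_div]
      calc C⁻¹ * p ≤ (c * r ^ d1 / 2) * p := mul_le_mul_of_nonneg_right hCinv hp.le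
        _ = c * (r ^ d1 * ((1/2) * p)) := by ring
        _ ≤ c * (r ^ d1 * J) :=
            mul_le_mul_of_nonneg_left
              (mul_le_mul_of_nonneg_left hJlow (pow_nonneg hr.le _)) hc.le
        _ ≤ c * K := mul_le_mul_of_nonneg_left hKlow hc.le
        _ = _ := by rw [hkey]
    · -- upper bound
      have hCge : 2 * c * R ^ d1 ≤ C := by
        rw [hCdef]
        have := le_max_left (2 * c * R ^ d1) (2 / (c * r ^ d1))
        linarith
      calc (∫ x in {x : E | r < ‖x‖ ∧ ‖x‖ < R}, 1/(ε + (‖x‖ - r)^m))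
          = c * K := by rw [hkey]
        _ ≤ c * (R ^ d1 * J) := mul_le_mul_of_nonneg_left hKhigh hc.le
        _ ≤ c * (R ^ d1 * (2 * p)) :=
            mul_le_mul_of_nonneg_left
              (mul_le_mul_of_nonneg_left hJhigh (pow_nonneg (by linarith) _)) hc.le
        _ = (2 * c * R ^ d1) * p := by ring
        _ ≤ C * p := mul_le_mul_of_nonneg_right hCge hp.le
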